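/- For every z ∈ ℂ with |z| ≤ 1 and every f ∈ C^k([0,1]) (k finite), the series Q_w(z)f = Σ_{n≥1} z^n · e^{w∘φ_n} · (f∘φ_n) converges absolutely in the norm ‖·‖_k to a C^k function on [0,1], and there is a constant C(k), independent of f and z, such that ‖Q_w(z)f‖_k ≤ C(k)·c_k·‖f‖_k; in particular Q_w(z) defines a bounded linear operator from C^k([0,1]) to C^k([0,1]). -/

import Mathlib

open Set Filter Topology Asymptotics MeasureTheory

noncomputable section

/-- The first passage time of `x` to the interval `(a,1)` under iteration of `T`
(`τ(x) = min {n ≥ 0 : Tⁿ x ∈ (a,1)}`). -/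
def tau (T : ℝ → ℝ) (a : ℝ) (x : ℝ) : ℕ := sInf {n : ℕ | T^[n] x ∈ Set.Ioo a 1}

/-- The jump transformation `G(x) = T^{1+τ(x)}(x)` of `T` on `(a,1)`. -/
def Gmap (T : ℝ → ℝ) (a : ℝ) (x : ℝ) : ℝ := T^[1 + tau T a x] x

/-- The sequence `a₀ = 1`, `a₁ = a`, `a_ℓ = ψ₀(a_{ℓ-1})`. -/
def aseq (ψ₀ : ℝ → ℝ) (a : ℝ) : ℕ → ℝ
  | 0 => 1
  | 1 => a
  | n + 2 => ψ₀ (aseq ψ₀ a (n + 1))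

/-- The level sets `A_ℓ = (a_ℓ, a_{ℓ-1})` of the first passage function. -/
def Aset (ψ₀ : ℝ → ℝ) (a : ℝ) (ℓ : ℕ) : Set ℝ := Set.Ioo (aseq ψ₀ a ℓ) (aseq ψ₀ a (ℓ - 1))

/-- The inverse branches `φ_ℓ = ψ₀^{ℓ-1} ∘ ψ₁` of the jump transformation. -/
def phib (ψ₀ ψ₁ : ℝ → ℝ) (ℓ : ℕ) : ℝ → ℝ := ψ₀^[ℓ - 1] ∘ ψ₁

/-- The induced potential `w(x) = ∑_{j=0}^{τ(x)} v(Tʲ x)`. -/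
def indw (T : ℝ → ℝ) (a : ℝ) (v : ℝ → ℝ) (x : ℝ) : ℝ :=
  ∑ j ∈ Finset.range (tau T a x + 1), v (T^[j] x)

/-- The `C^h` norm `‖f‖_h = max_{0 ≤ j ≤ h} sup_{[0,1]} |f^{(j)}|` of a function on `[0,1]`
(computed via the open interval `(0,1)`). -/
noncomputable def nrm {E : Type*} [NormedAddCommGroup E] [NormedSpace ℝ E]
    (h : ℕ) (f : ℝ → E) : ℝ :=
  (Finset.range (h + 1)).sup' ⟨0, Finset.mem_range.mpr (Nat.succ_pos h)⟩ fun j =>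
    sSup ((fun x => ‖iteratedDerivWithin j f (Set.Ioo (0 : ℝ) 1) x‖) '' Set.Ioo (0 : ℝ) 1)

/-- Hypotheses (H1)–(H5) on the parabolic map `T`. -/
structure Hyp (T : ℝ → ℝ) (a : ℝ) (ψ₀ ψ₁ : ℝ → ℝ) (r : ℕ∞) (c α ε ρ : ℝ) : Prop where
  ha : a ∈ Set.Ioo (0 : ℝ) 1
  hmaps : Set.MapsTo T (Set.Icc 0 1) (Set.Icc 0 1)
  mono0 : StrictMonoOn T (Set.Ioo 0 a)
  mono1 : StrictMonoOn T (Set.Ioo a 1) ∨ StrictAntiOn T (Set.Ioo a 1)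
  full0 : closure (T '' Set.Ioo 0 a) = Set.Icc 0 1
  full1 : closure (T '' Set.Ioo a 1) = Set.Icc 0 1
  hr : 2 ≤ r
  smooth0 : ContDiffOn ℝ r T (Set.Ioc 0 a)
  smooth1 : ContDiffOn ℝ r T (Set.Icc a 1)
  inv0 : ∀ y ∈ Set.Ioo (0 : ℝ) 1, ψ₀ y ∈ Set.Ioo 0 a ∧ T (ψ₀ y) = y
  inv0' : ∀ x ∈ Set.Ioo 0 a, ψ₀ (T x) = x
  inv1 : ∀ y ∈ Set.Ioo (0 : ℝ) 1, ψ₁ y ∈ Set.Ioo a 1 ∧ T (ψ₁ y) = y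
  inv1' : ∀ x ∈ Set.Ioo a 1, ψ₁ (T x) = x
  hc : 0 < c
  hα : 0 < α
  fix0 : T 0 = 0
  dT0 : derivWithin T (Set.Icc 0 1) 0 = 1
  asymp : Filter.Tendsto (fun x => (deriv T x - 1) / (c * x ^ α)) (nhdsWithin 0 (Set.Ioi 0)) (nhds 1)
  hε : 0 < ε
  hρ : 1 < ρ
  dmono : StrictMonoOn (deriv T) (Set.Ioo 0 ε)
  expand : ∀ x ∈ Set.Ico ε a ∪ Set.Ioo a 1, ρ ≤ |deriv T x|

/-- Hypothesis (H6) on the potential `v`: it is `C^k` on each branch interval and extends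
to a `C^k` function on `[0,a]` and on `[a,1]`; `v 0` is declared to be the value at `0`
of the extension to `[0,a]`. -/
structure HypV (a : ℝ) (v : ℝ → ℝ) (k : ℕ∞) : Prop where
  ext0 : ∃ v0 : ℝ → ℝ, ContDiffOn ℝ k v0 (Set.Icc 0 a) ∧ Set.EqOn v v0 (Set.Ioo 0 a) ∧ v 0 = v0 0
  ext1 : ∃ v1 : ℝ → ℝ, ContDiffOn ℝ k v1 (Set.Icc a 1) ∧ Set.EqOn v v1 (Set.Ioo a 1)

/-- Hypothesis (H7): `∑_n ‖e^{w∘φ_n}‖_h (1 + ‖φ_n‖_h^h) ≤ c_k` for all `h ≤ k`. -/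
def H7 (T : ℝ → ℝ) (a : ℝ) (ψ₀ ψ₁ v : ℝ → ℝ) (k : ℕ) (ck : ℝ) : Prop :=
  ∀ h : ℕ, h ≤ k →
    Summable (fun n : ℕ =>
      nrm h (fun x => Real.exp (indw T a v (phib ψ₀ ψ₁ (n + 1) x))) *
        (1 + nrm h (phib ψ₀ ψ₁ (n + 1)) ^ h)) ∧
    (∑' n : ℕ,
      nrm h (fun x => Real.exp (indw T a v (phib ψ₀ ψ₁ (n + 1) x))) *
        (1 + nrm h (phib ψ₀ ψ₁ (n + 1)) ^ h)) ≤ ck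

/-- Composition `φ_β = φ_{β₁} ∘ ⋯ ∘ φ_{β_m}` along a list `β` of branch indices. -/
def phibList (ψ₀ ψ₁ : ℝ → ℝ) : List ℕ → ℝ → ℝ
  | [], x => x
  | n :: l, x => phib ψ₀ ψ₁ n (phibList ψ₀ ψ₁ l x)

/-- The weight `W_β(x) = exp (∑_{j=1}^m w(φ_{β_j  … β_m}(x)))`. -/
def Wb (T : ℝ → ℝ) (a : ℝ) (ψ₀ ψ₁ v : ℝ → ℝ) : List ℕ → ℝ → ℝ
  | [], _ => 1
  | n :: l, x =>
      Real.exp (indw T a v (phib ψ₀ ψ₁ n (phibList ψ₀ ψ₁ l x))) * Wb T a ψ₀ ψ₁ v l x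

/-- `Λ_m(z) = sup_{x ∈ (0,1)} ∑_{β ∈ ℕ_{≥1}^m} |z|^{|β|} W_β(x)`, as a function of `|z|`. -/
noncomputable def Lam (T : ℝ → ℝ) (a : ℝ) (ψ₀ ψ₁ v : ℝ → ℝ) (m : ℕ) (zn : ℝ) : ℝ :=
  sSup ((fun x => ∑' β : Fin m → ℕ,
      zn ^ (m + ∑ i, β i) * Wb T a ψ₀ ψ₁ v (List.ofFn fun i => β i + 1) x) '' Set.Ioo (0 : ℝ) 1)



section Helpers

variable {E : Type*} [NormedAddCommGroup E] [NormedSpace ℝ E]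

lemma nrm_nonneg (h : ℕ) (f : ℝ → E) : 0 ≤ nrm h f := by
  refine le_trans (Real.sSup_nonneg ?_)
    (Finset.le_sup' (fun j => sSup ((fun x => ‖iteratedDerivWithin j f (Set.Ioo (0 : ℝ) 1) x‖) ''
      Set.Ioo (0 : ℝ) 1)) (Finset.mem_range.mpr (Nat.succ_pos h)))
  rintro y ⟨x, -, rfl⟩; positivity

lemma sSup_le_nrm {k : ℕ} (f : ℝ → E) {j : ℕ} (hj : j ≤ k) :
    sSup ((fun x => ‖iteratedDerivWithin j f (Set.Ioo (0 : ℝ) 1) x‖) '' Set.Ioo (0 : ℝ) 1)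
      ≤ nrm k f :=
  Finset.le_sup' (fun j => sSup ((fun x => ‖iteratedDerivWithin j f (Set.Ioo (0 : ℝ) 1) x‖) ''
    Set.Ioo (0 : ℝ) 1)) (Finset.mem_range.mpr (Nat.lt_succ_of_le hj))

lemma dominate {k : ℕ} {g h : ℝ → E}
    (hg : ContDiffOn ℝ k g (Set.Icc 0 1)) (hEq : EqOn h g (Set.Ioo 0 1)) :
    (∀ j, j ≤ k → ∀ x ∈ Set.Ioo (0:ℝ) 1,
      iteratedDerivWithin j h (Set.Ioo 0 1) x = iteratedDerivWithin j g (Set.Icc 0 1) x) ∧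
    (∀ j, j ≤ k → ∀ x ∈ Set.Icc (0:ℝ) 1,
      ‖iteratedDerivWithin j g (Set.Icc 0 1) x‖ ≤ nrm k h) := by
  have hIoo : UniqueDiffOn ℝ (Set.Ioo (0:ℝ) 1) := isOpen_Ioo.uniqueDiffOn
  have hIcc : UniqueDiffOn ℝ (Set.Icc (0:ℝ) 1) := uniqueDiffOn_Icc (by norm_num)
  have heq : ∀ j, ∀ x ∈ Set.Ioo (0:ℝ) 1,
      iteratedDerivWithin j h (Set.Ioo 0 1) x = iteratedDerivWithin j g (Set.Icc 0 1) x := by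
    intro j x hx
    have e1 : iteratedDerivWithin j h (Set.Ioo 0 1) x = iteratedDerivWithin j g (Set.Ioo 0 1) x :=
      iteratedDerivWithin_congr hEq hx
    have e2 : iteratedDerivWithin j g (Set.Ioo 0 1) x
        = iteratedDerivWithin j g (Set.Icc 0 1) x := by
      have hset : Set.Ioo (0:ℝ) 1 =ᶠ[𝓝 x] Set.Icc (0:ℝ) 1 := by
        filter_upwards [isOpen_Ioo.mem_nhds hx] with y hy
        exact eq_iff_iff.mpr (iff_of_true hy (Set.mem_Icc_of_Ioo hy))
      simp only [iteratedDerivWithin_eq_iteratedFDerivWithin]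
      rw [iteratedFDerivWithin_congr_set hset]
    rw [e1, e2]
  have hcont : ∀ j, j ≤ k → ContinuousOn
      (fun x => ‖iteratedDerivWithin j g (Set.Icc 0 1) x‖) (Set.Icc (0:ℝ) 1) := by
    intro j hj
    have := (hg.continuousOn_iteratedFDerivWithin (by exact_mod_cast hj) hIcc).norm
    refine this.congr fun x hx => ?_
    exact norm_iteratedFDerivWithin_eq_norm_iteratedDerivWithin.symm
  have hbdd : ∀ j, j ≤ k → ∃ C, ∀ x ∈ Set.Icc (0:ℝ) 1,
      ‖iteratedDerivWithin j g (Set.Icc 0 1) x‖ ≤ C := by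
    intro j hj
    obtain ⟨C, hC⟩ := isCompact_Icc.exists_bound_of_continuousOn (hcont j hj)
    exact ⟨C, fun x hx => by simpa using hC x hx⟩
  have hle : ∀ j, j ≤ k → ∀ x ∈ Set.Ioo (0:ℝ) 1,
      ‖iteratedDerivWithin j h (Set.Ioo 0 1) x‖ ≤ nrm k h := by
    intro j hj x hx
    obtain ⟨C, hC⟩ := hbdd j hj
    have hub : BddAbove ((fun x => ‖iteratedDerivWithin j h (Set.Ioo 0 1) x‖) ''
        Set.Ioo (0:ℝ) 1) := by
      refine ⟨C, ?_⟩
      rintro y ⟨x', hx', rfl⟩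
      show ‖iteratedDerivWithin j h (Set.Ioo 0 1) x'‖ ≤ C
      rw [heq j x' hx']
      exact hC x' (Set.mem_Icc_of_Ioo hx')
    have hmem : ‖iteratedDerivWithin j h (Set.Ioo 0 1) x‖ ∈
        (fun x => ‖iteratedDerivWithin j h (Set.Ioo 0 1) x‖) '' Set.Ioo (0:ℝ) 1 := ⟨x, hx, rfl⟩
    exact le_trans (le_csSup hub hmem) (sSup_le_nrm h hj)
  refine ⟨fun j hj => heq j, fun j hj x hx => ?_⟩
  have hcl : x ∈ closure (Set.Ioo (0:ℝ) 1) := by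
    rwa [closure_Ioo (by norm_num : (0:ℝ) ≠ 1)]
  haveI hne : (𝓝[Set.Ioo (0:ℝ) 1] x).NeBot := mem_closure_iff_nhdsWithin_neBot.mp hcl
  have htend : Tendsto (fun y => ‖iteratedDerivWithin j g (Set.Icc 0 1) y‖)
      (𝓝[Set.Ioo (0:ℝ) 1] x) (𝓝 ‖iteratedDerivWithin j g (Set.Icc 0 1) x‖) :=
    ((hcont j hj x hx).mono Set.Ioo_subset_Icc_self)
  refine le_of_tendsto htend ?_
  filter_upwards [self_mem_nhdsWithin] with y hy
  rw [← heq j y hy]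
  exact hle j hj y hy

/-- Taylor polynomial of `g` at `e` of degree `m`, via `iteratedDerivWithin` on `[0,1]`. -/
def glueP (m : ℕ) (g : ℝ → E) (e : ℝ) : ℝ → E := fun y =>
  ∑ j ∈ Finset.range (m+1),
    ((j.factorial : ℝ)⁻¹ * (y - e)^j) • iteratedDerivWithin j g (Set.Icc 0 1) e

/-- `C^m` extension of `g` from `[0,1]` to `ℝ` by Taylor polynomials at the endpoints. -/
def glueExt (m : ℕ) (g : ℝ → E) : ℝ → E := fun y =>
  if y < 0 then glueP m g 0 y else if y ≤ 1 then g y else glueP m g 1 y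

lemma glueP_self (m : ℕ) (g : ℝ → E) (e : ℝ) : glueP m g e e = g e := by
  unfold glueP
  rw [Finset.sum_eq_single 0]
  · simp
  · intro j _ hj
    rcases Nat.exists_eq_succ_of_ne_zero hj with ⟨i, rfl⟩
    simp [sub_self, zero_pow]
  · simp

lemma glueExt_eqOn (m : ℕ) (g : ℝ → E) : EqOn (glueExt m g) g (Set.Icc 0 1) := by
  intro x hx
  unfold glueExt
  rw [if_neg (not_lt.mpr hx.1), if_pos hx.2]

lemma glueP_hasDerivAt (m : ℕ) (g : ℝ → E) {e : ℝ} (he : e ∈ Set.Icc (0:ℝ) 1) (y : ℝ) :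
    HasDerivAt (glueP (m+1) g e)
      (glueP m (derivWithin g (Set.Icc 0 1)) e y) y := by
  have hIcc : UniqueDiffOn ℝ (Set.Icc (0:ℝ) 1) := uniqueDiffOn_Icc (by norm_num)
  have h1 : ∀ j ∈ Finset.range (m+2), HasDerivAt
      (fun y => ((j.factorial:ℝ)⁻¹ * (y-e)^j) • iteratedDerivWithin j g (Set.Icc 0 1) e)
      (((j.factorial:ℝ)⁻¹ * (j * (y-e)^(j-1))) • iteratedDerivWithin j g (Set.Icc 0 1) e) y := by
    intro j _
    have hp : HasDerivAt (fun y => (y - e)^j) ((j : ℝ) * (y-e)^(j-1)) y := by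
      simpa [Function.comp_def] using (hasDerivAt_pow j (y-e)).comp y ((hasDerivAt_id y).sub_const e)
    exact (hp.const_mul ((j.factorial:ℝ)⁻¹)).smul_const _
  have hsum := HasDerivAt.fun_sum h1
  convert hsum using 1
  · rfl
  rw [Finset.sum_range_succ']
  have h0 : (((0:ℕ).factorial:ℝ)⁻¹ * ((0:ℕ) * (y-e)^(0-1))) •
      iteratedDerivWithin 0 g (Set.Icc 0 1) e = 0 := by simp
  rw [h0, add_zero]
  refine Finset.sum_congr rfl fun i _ => ?_
  have hc : iteratedDerivWithin i (derivWithin g (Set.Icc 0 1)) (Set.Icc 0 1) e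
      = iteratedDerivWithin (i+1) g (Set.Icc 0 1) e := (congrFun iteratedDerivWithin_succ' e).symm
  rw [hc]
  congr 1
  have hfac : ((i+1).factorial : ℝ) = (i+1) * i.factorial := by
    rw [Nat.factorial_succ]; push_cast; ring
  have hne : ((i:ℝ)+1) ≠ 0 := by positivity
  have hfne : ((i.factorial:ℝ)) ≠ 0 := by
    exact_mod_cast Nat.factorial_ne_zero i
  rw [hfac]
  push_cast
  field_simp

lemma glueP_norm_le (m : ℕ) (g : ℝ → E) {e y M : ℝ} (hye : |y - e| ≤ 1)
    (hM : ∀ j, j ≤ m → ‖iteratedDerivWithin j g (Set.Icc 0 1) e‖ ≤ M) :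
    ‖glueP m g e y‖ ≤ (m+1) * M := by
  have h := norm_sum_le (Finset.range (m+1))
    (fun j => ((j.factorial : ℝ)⁻¹ * (y - e)^j) • iteratedDerivWithin j g (Set.Icc 0 1) e)
  refine h.trans ?_
  have : ∀ j ∈ Finset.range (m+1),
      ‖((j.factorial : ℝ)⁻¹ * (y - e)^j) • iteratedDerivWithin j g (Set.Icc 0 1) e‖ ≤ M := by
    intro j hj
    rw [norm_smul]
    have h1 : ‖((j.factorial : ℝ)⁻¹ * (y - e)^j)‖ ≤ 1 := by
      rw [norm_mul, norm_inv, norm_pow]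
      have hf : (1:ℝ) ≤ ‖(j.factorial : ℝ)‖ := by
        rw [Real.norm_natCast]
        exact_mod_cast Nat.one_le_iff_ne_zero.mpr (Nat.factorial_ne_zero j)
      have h2 : ‖y - e‖^j ≤ 1 := pow_le_one₀ (norm_nonneg _) (by rwa [Real.norm_eq_abs])
      calc ‖(j.factorial : ℝ)‖⁻¹ * ‖y-e‖^j ≤ 1 * 1 := by
            apply mul_le_mul _ h2 (by positivity) zero_le_one
            exact inv_le_one_of_one_le₀ hf
        _ = 1 := by norm_num
    have h0M : 0 ≤ M := le_trans (norm_nonneg _) (hM 0 (Nat.zero_le m))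
    calc ‖((j.factorial : ℝ)⁻¹ * (y - e)^j)‖ * ‖iteratedDerivWithin j g (Set.Icc 0 1) e‖
        ≤ 1 * M := mul_le_mul h1 (hM j (Nat.lt_succ_iff.mp (Finset.mem_range.mp hj)))
          (norm_nonneg _) zero_le_one
      _ = M := one_mul M
  calc (∑ j ∈ Finset.range (m+1), ‖((j.factorial : ℝ)⁻¹ * (y - e)^j) •
          iteratedDerivWithin j g (Set.Icc 0 1) e‖)
      ≤ ∑ _j ∈ Finset.range (m+1), M := Finset.sum_le_sum this
    _ = (m+1) * M := by
        rw [Finset.sum_const, Finset.card_range, nsmul_eq_mul]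
        push_cast
        ring

theorem glue_spec : ∀ (m : ℕ) (g : ℝ → E), ContDiffOn ℝ m g (Set.Icc 0 1) →
    ContDiff ℝ m (glueExt m g) ∧
    (∀ M : ℝ, 0 ≤ M →
      (∀ j, j ≤ m → ∀ x ∈ Set.Icc (0:ℝ) 1, ‖iteratedDerivWithin j g (Set.Icc 0 1) x‖ ≤ M) →
      ∀ j, j ≤ m → ∀ y ∈ Set.Icc (-1:ℝ) 2, ‖iteratedDeriv j (glueExt m g) y‖ ≤ (m+2) * M) := by
  intro m
  induction m with
  | zero =>
    intro g hg
    have hfun : glueExt 0 g = fun y => g (max 0 (min y 1)) := by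
      funext y
      unfold glueExt
      split_ifs with h1 h2
      · have : glueP 0 g 0 y = g 0 := by simp [glueP]
        rw [this, min_eq_left (by linarith), max_eq_left (by linarith)]
      · rw [min_eq_left h2, max_eq_right (not_lt.mp h1)]
      · have : glueP 0 g 1 y = g 1 := by simp [glueP]
        rw [this, min_eq_right (by linarith), max_eq_right (by norm_num)]
    constructor
    · rw [show ((0:ℕ) : WithTop ℕ∞) = 0 from rfl, contDiff_zero, hfun]
      refine hg.continuousOn.comp_continuous ?_ ?_
      · exact continuous_const.max (continuous_id.min continuous_const)
      · intro y
        exact ⟨le_max_left _ _, max_le (by norm_num) (min_le_right _ _)⟩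
    · intro M hM0 hM j hj y hy
      interval_cases j
      rw [iteratedDeriv_zero]
      have h2M : M ≤ ((0:ℕ)+2) * M := by push_cast; nlinarith
      by_cases h1 : y < 0
      · rw [show glueExt 0 g y = glueP 0 g 0 y from by simp only [glueExt, if_pos h1]]
        refine le_trans (glueP_norm_le 0 g (M := M) ?_ fun i hi => ?_) ?_
        · rw [sub_zero, abs_le]; exact ⟨hy.1, by linarith⟩
        · interval_cases i
          exact hM 0 le_rfl 0 (by norm_num)
        · push_cast; nlinarith
      · by_cases h2 : y ≤ 1
        · rw [show glueExt 0 g y = g y from by simp only [glueExt, if_neg h1, if_pos h2]]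
          have := hM 0 le_rfl y ⟨not_lt.mp h1, h2⟩
          rw [iteratedDerivWithin_zero] at this
          exact this.trans h2M
        · rw [show glueExt 0 g y = glueP 0 g 1 y from by
            simp only [glueExt, if_neg h1, if_neg h2]]
          refine le_trans (glueP_norm_le 0 g (M := M) ?_ fun i hi => ?_) ?_
          · rw [abs_le]; constructor <;> [linarith [hy.2]; linarith [hy.2]]
          · interval_cases i
            exact hM 0 le_rfl 1 (by norm_num)
          · push_cast; nlinarith
  | succ m IH =>
    intro g hg
    have hIcc : UniqueDiffOn ℝ (Set.Icc (0:ℝ) 1) := uniqueDiffOn_Icc (by norm_num)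
    have hcast : ((m+1:ℕ) : WithTop ℕ∞) = (m : WithTop ℕ∞) + 1 := by push_cast; rfl
    have hg1 : ContDiffOn ℝ ((m : WithTop ℕ∞)+1) g (Set.Icc 0 1) := by rwa [hcast] at hg
    set g' := derivWithin g (Set.Icc 0 1) with hg'def
    have hg' : ContDiffOn ℝ m g' (Set.Icc 0 1) :=
      ((contDiffOn_succ_iff_derivWithin hIcc).mp hg1).2.2
    have hdiffOn : DifferentiableOn ℝ g (Set.Icc 0 1) :=
      ((contDiffOn_succ_iff_derivWithin hIcc).mp hg1).1
    have he0 : (0:ℝ) ∈ Set.Icc (0:ℝ) 1 := by norm_num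
    have he1 : (1:ℝ) ∈ Set.Icc (0:ℝ) 1 := by norm_num
    have hgeq0 : glueExt (m+1) g 0 = g 0 := glueExt_eqOn (m+1) g he0
    have hgeq1 : glueExt (m+1) g 1 = g 1 := glueExt_eqOn (m+1) g he1
    have hderiv : ∀ y, HasDerivAt (glueExt (m+1) g) (glueExt m g' y) y := by
      intro y
      rcases lt_trichotomy y 0 with hy0 | rfl | hy0
      · -- y < 0
        have hev : glueExt (m+1) g =ᶠ[𝓝 y] glueP (m+1) g 0 := by
          filter_upwards [Iio_mem_nhds hy0] with z hz
          rw [Set.mem_Iio] at hz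
          simp only [glueExt, if_pos hz]
        rw [show glueExt m g' y = glueP m g' 0 y from by simp only [glueExt, if_pos hy0]]
        exact (glueP_hasDerivAt m g he0 y).congr_of_eventuallyEq hev
      · -- y = 0
        have hleft : HasDerivWithinAt (glueExt (m+1) g) (g' 0) (Set.Iic 0) 0 := by
          have h := (glueP_hasDerivAt m g he0 0).hasDerivWithinAt (s := Set.Iic 0)
          rw [glueP_self] at h
          refine h.congr ?_ ?_
          · intro z hz
            rw [Set.mem_Iic] at hz
            rcases lt_or_eq_of_le hz with hz' | hz'
            · simp only [glueExt, if_pos hz']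
            · subst hz'
              rw [hgeq0, glueP_self]
          · rw [hgeq0, glueP_self]
        have hright : HasDerivWithinAt (glueExt (m+1) g) (g' 0) (Set.Ici 0) 0 := by
          have h0 : HasDerivWithinAt g (g' 0) (Set.Icc 0 1) 0 :=
            (hdiffOn 0 he0).hasDerivWithinAt
          have h1 : HasDerivWithinAt (glueExt (m+1) g) (g' 0) (Set.Icc 0 1) 0 :=
            h0.congr (glueExt_eqOn (m+1) g) hgeq0
          refine h1.mono_of_mem_nhdsWithin ?_
          refine mem_nhdsWithin.mpr ⟨Set.Iio 1, isOpen_Iio, by norm_num, fun z hz => ?_⟩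
          exact ⟨hz.2, hz.1.le⟩
        have := hleft.union hright
        rw [Set.Iic_union_Ici, hasDerivWithinAt_univ] at this
        rwa [show glueExt m g' 0 = g' 0 from glueExt_eqOn m g' he0]
      · rcases lt_trichotomy y 1 with hy1 | rfl | hy1
        · -- 0 < y < 1
          have hev : glueExt (m+1) g =ᶠ[𝓝 y] g := by
            filter_upwards [Ioo_mem_nhds hy0 hy1] with z hz
            exact glueExt_eqOn (m+1) g (Set.mem_Icc_of_Ioo hz)
          have hd := ((hdiffOn y ⟨hy0.le, hy1.le⟩).differentiableAt
            (Icc_mem_nhds hy0 hy1)).hasDerivAt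
          rw [show glueExt m g' y = g' y from glueExt_eqOn m g' ⟨hy0.le, hy1.le⟩,
            show g' y = deriv g y from derivWithin_of_mem_nhds (Icc_mem_nhds hy0 hy1)]
          exact hd.congr_of_eventuallyEq hev
        · -- y = 1
          have hleft : HasDerivWithinAt (glueExt (m+1) g) (g' 1) (Set.Iic 1) 1 := by
            have h0 : HasDerivWithinAt g (g' 1) (Set.Icc 0 1) 1 :=
              (hdiffOn 1 he1).hasDerivWithinAt
            have h1 : HasDerivWithinAt (glueExt (m+1) g) (g' 1) (Set.Icc 0 1) 1 :=
              h0.congr (glueExt_eqOn (m+1) g) hgeq1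
            refine h1.mono_of_mem_nhdsWithin ?_
            refine mem_nhdsWithin.mpr ⟨Set.Ioi 0, isOpen_Ioi, by norm_num, fun z hz => ?_⟩
            exact ⟨hz.1.le, hz.2⟩
          have hright : HasDerivWithinAt (glueExt (m+1) g) (g' 1) (Set.Ici 1) 1 := by
            have h := (glueP_hasDerivAt m g he1 1).hasDerivWithinAt (s := Set.Ici 1)
            rw [glueP_self] at h
            refine h.congr ?_ ?_
            · intro z hz
              rw [Set.mem_Ici] at hz
              rcases lt_or_eq_of_le hz with hz' | hz'
              · simp only [glueExt, if_neg (by linarith : ¬ z < 0), if_neg (not_le.mpr hz')]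
              · rw [← hz', hgeq1, glueP_self]
            · rw [hgeq1, glueP_self]
          have := hleft.union hright
          rw [Set.Iic_union_Ici, hasDerivWithinAt_univ] at this
          rwa [show glueExt m g' 1 = g' 1 from glueExt_eqOn m g' he1]
        · -- y > 1
          have hev : glueExt (m+1) g =ᶠ[𝓝 y] glueP (m+1) g 1 := by
            filter_upwards [Ioi_mem_nhds hy1] with z hz
            rw [Set.mem_Ioi] at hz
            simp only [glueExt, if_neg (by linarith : ¬ z < 0), if_neg (not_le.mpr hz)]
          rw [show glueExt m g' y = glueP m g' 1 y from by
            simp only [glueExt, if_neg (by linarith : ¬ y < 0), if_neg (not_le.mpr hy1)]]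
          exact (glueP_hasDerivAt m g he1 y).congr_of_eventuallyEq hev
    have hdiffable : Differentiable ℝ (glueExt (m+1) g) := fun y => (hderiv y).differentiableAt
    have hde : deriv (glueExt (m+1) g) = glueExt m g' := funext fun y => (hderiv y).deriv
    obtain ⟨IH1, IH2⟩ := IH g' hg'
    constructor
    · rw [hcast]
      refine contDiff_succ_iff_deriv.mpr ⟨hdiffable, ?_, ?_⟩
      · intro h
        exact absurd h (by simp)
      · rwa [hde]
    · intro M hM0 hM j hj y hy
      match j with
      | 0 =>
        rw [iteratedDeriv_zero]
        by_cases h1 : y < 0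
        · rw [show glueExt (m+1) g y = glueP (m+1) g 0 y from by simp only [glueExt, if_pos h1]]
          refine le_trans (glueP_norm_le (m+1) g (M := M) ?_ fun i hi => hM i hi 0 he0) ?_
          · rw [sub_zero, abs_le]; exact ⟨hy.1, by linarith⟩
          · push_cast; nlinarith
        · by_cases h2 : y ≤ 1
          · have := hM 0 (Nat.zero_le _) y ⟨not_lt.mp h1, h2⟩
            rw [iteratedDerivWithin_zero] at this
            rw [show glueExt (m+1) g y = g y from glueExt_eqOn (m+1) g ⟨not_lt.mp h1, h2⟩]
            refine this.trans ?_
            push_cast; nlinarith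
          · rw [show glueExt (m+1) g y = glueP (m+1) g 1 y from by
              simp only [glueExt, if_neg h1, if_neg h2]]
            refine le_trans (glueP_norm_le (m+1) g (M := M) ?_ fun i hi => hM i hi 1 he1) ?_
            · rw [abs_le]; exact ⟨by linarith, by linarith [hy.2]⟩
            · push_cast; nlinarith
      | (j'+1) =>
        rw [iteratedDeriv_succ', hde]
        have hM' : ∀ i, i ≤ m → ∀ x ∈ Set.Icc (0:ℝ) 1,
            ‖iteratedDerivWithin i g' (Set.Icc 0 1) x‖ ≤ M := by
          intro i hi x hx
          rw [hg'def, ← iteratedDerivWithin_succ']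
          exact hM (i+1) (by omega) x hx
        have := IH2 M hM0 hM' j' (by omega) y hy
        refine this.trans ?_
        push_cast; nlinarith


lemma glue_pack {E : Type*} [NormedAddCommGroup E] [NormedSpace ℝ E] (k : ℕ) (g : ℝ → E)
    (hg : ContDiffOn ℝ k g (Set.Icc 0 1)) {M : ℝ} (hM0 : 0 ≤ M)
    (hM : ∀ j, j ≤ k → ∀ x ∈ Set.Icc (0:ℝ) 1, ‖iteratedDerivWithin j g (Set.Icc 0 1) x‖ ≤ M) :
    ∃ G : ℝ → E, ContDiff ℝ k G ∧ Set.EqOn G g (Set.Icc 0 1) ∧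
      ∀ j, j ≤ k → ∀ y ∈ Set.Icc (-1:ℝ) 2, ‖iteratedDeriv j G y‖ ≤ (k+2) * M := by
  obtain ⟨h1, h2⟩ := glue_spec k g hg
  exact ⟨glueExt k g, h1, fun x hx => glueExt_eqOn k g hx,
    fun j hj y hy => h2 M hM0 hM j hj y hy⟩

lemma inv_branch {T ψ : ℝ → ℝ} {S : Set ℝ} {y : ℝ} {n : WithTop ℕ∞} (hn : 1 ≤ n)
    (hS : IsOpen S) (hinj : Set.InjOn T S)
    (hψmem : ∀ z ∈ Set.Ioo (0:ℝ) 1, ψ z ∈ S) (hTψ : ∀ z ∈ Set.Ioo (0:ℝ) 1, T (ψ z) = z)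
    (hy : y ∈ Set.Ioo (0:ℝ) 1)
    (hT : ContDiffAt ℝ n T (ψ y)) (hd : deriv T (ψ y) ≠ 0) :
    ContDiffAt ℝ n ψ y ∧ HasDerivAt ψ (deriv T (ψ y))⁻¹ y := by
  set x := ψ y with hxdef
  have hTd : HasDerivAt T (deriv T x) x := (hT.differentiableAt (lt_of_lt_of_le zero_lt_one hn).ne').hasDerivAt
  set e : ℝ ≃L[ℝ] ℝ := ContinuousLinearEquiv.unitsEquivAut ℝ (Units.mk0 (deriv T x) hd) with hedef
  have hunit : (e : ℝ →L[ℝ] ℝ) = ContinuousLinearMap.smulRight (1 : ℝ →L[ℝ] ℝ) (deriv T x) := by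
    ext z
    simp [hedef, ContinuousLinearEquiv.unitsEquivAut]
  have hdT : HasFDerivAt T (e : ℝ →L[ℝ] ℝ) x := by
    rw [hunit]
    exact hTd.hasFDerivAt
  set P := hT.toOpenPartialHomeomorph T hdT (lt_of_lt_of_le zero_lt_one hn).ne' with hPdef
  have hxsrc : x ∈ P.source := hT.mem_toOpenPartialHomeomorph_source hdT (lt_of_lt_of_le zero_lt_one hn).ne'
  have hPcoe : (P : ℝ → ℝ) = T := rfl
  have hTx : T x = y := hTψ y hy
  have hyt : y ∈ P.target := by
    have := hT.image_mem_toOpenPartialHomeomorph_target hdT (lt_of_lt_of_le zero_lt_one hn).ne'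
    rwa [hTx] at this
  have hPx : P.symm y = x := by
    rw [← hTx, ← hPcoe]
    exact P.left_inv hxsrc
  have hsymm_cont : ContinuousAt P.symm y := P.continuousAt_symm hyt
  have hcd_symm : ContDiffAt ℝ n P.symm y := by
    refine P.contDiffAt_symm (f₀' := e) hyt ?_ ?_
    · rw [hPx, hPcoe]
      exact hdT
    · rw [hPx, hPcoe]
      exact hT
  have hev : P.symm =ᶠ[𝓝 y] ψ := by
    have h1 : ∀ᶠ z in 𝓝 y, P.symm z ∈ S := by
      have : S ∈ 𝓝 (P.symm y) := hS.mem_nhds (hPx ▸ hψmem y hy)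
      exact hsymm_cont.eventually_mem this
    have h2 : ∀ᶠ z in 𝓝 y, T (P.symm z) = z := by
      filter_upwards [P.open_target.mem_nhds hyt] with z hz
      rw [← hPcoe]
      exact P.right_inv hz
    have h3 : ∀ᶠ z in 𝓝 y, z ∈ Set.Ioo (0:ℝ) 1 := isOpen_Ioo.mem_nhds hy
    filter_upwards [h1, h2, h3] with z hz1 hz2 hz3
    refine hinj hz1 (hψmem z hz3) ?_
    rw [hz2, hTψ z hz3]
  have hcd : ContDiffAt ℝ n ψ y := hcd_symm.congr_of_eventuallyEq hev.symm
  refine ⟨hcd, ?_⟩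
  have hψda : HasDerivAt ψ (deriv ψ y) y := (hcd.differentiableAt (lt_of_lt_of_le zero_lt_one hn).ne').hasDerivAt
  have hcomp : HasDerivAt (T ∘ ψ) (deriv T x * deriv ψ y) y := hTd.comp y hψda
  have hidev : T ∘ ψ =ᶠ[𝓝 y] id := by
    filter_upwards [isOpen_Ioo.mem_nhds hy] with z hz
    exact hTψ z hz
  have hu : HasDerivAt (id : ℝ → ℝ) (deriv T x * deriv ψ y) y :=
    hcomp.congr_of_eventuallyEq hidev.symm
  have h1 : deriv T x * deriv ψ y = 1 := hu.unique (hasDerivAt_id y)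
  have h2 : deriv ψ y = (deriv T x)⁻¹ := by
    field_simp at h1 ⊢
    linarith [h1]
  rwa [h2] at hψda

lemma boot {k : ℕ} {Ψ G : ℝ → ℝ} {c d : ℝ} {S : Set ℝ} (hcd : c < d)
    (hG : ContDiffOn ℝ k G S) (hmaps : Set.MapsTo Ψ (Set.Icc c d) S)
    (hcont : ContinuousOn Ψ (Set.Icc c d))
    (hderiv : ∀ x ∈ Set.Ioo c d, HasDerivAt Ψ (G (Ψ x)) x) :
    ContDiffOn ℝ k Ψ (Set.Icc c d) := by
  induction k with
  | zero => exact contDiffOn_zero.mpr hcont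
  | succ m IH =>
    have hGm : ContDiffOn ℝ m G S := hG.of_le (by exact_mod_cast Nat.le_succ m)
    have hΨm : ContDiffOn ℝ m Ψ (Set.Icc c d) := IH hGm
    set u := fun x => G (Ψ x) with hudef
    have hu : ContDiffOn ℝ m u (Set.Icc c d) := hGm.comp hΨm hmaps
    have hucont : ContinuousOn u (Set.Icc c d) := hu.continuousOn
    have hdiff : DifferentiableOn ℝ Ψ (Set.Ioo c d) := fun z hz =>
      ((hderiv z hz).differentiableAt).differentiableWithinAt
    have hder : ∀ x ∈ Set.Icc c d, HasDerivWithinAt Ψ (u x) (Set.Icc c d) x := by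
      intro x hx
      rcases eq_or_lt_of_le hx.1 with h1 | h1
      · subst h1
        have hlim : ContinuousWithinAt Ψ (Set.Ioo c d) c :=
          (hcont c (Set.left_mem_Icc.mpr hcd.le)).mono Set.Ioo_subset_Icc_self
        have hs : Set.Ioo c d ∈ 𝓝[>] c := Ioo_mem_nhdsGT_of_mem ⟨le_rfl, hcd⟩
        have hlim' : Tendsto (deriv Ψ) (𝓝[>] c) (𝓝 (u c)) := by
          rw [← nhdsWithin_Ioo_eq_nhdsGT hcd]
          have h1 : Tendsto u (𝓝[Set.Ioo c d] c) (𝓝 (u c)) :=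
            ((hucont c (Set.left_mem_Icc.mpr hcd.le)).mono Set.Ioo_subset_Icc_self).tendsto
          refine h1.congr' ?_
          filter_upwards [self_mem_nhdsWithin] with z hz
          exact ((hderiv z hz).deriv).symm
        exact (hasDerivWithinAt_Ici_of_tendsto_deriv hdiff hlim hs hlim').mono
          Set.Icc_subset_Ici_self
      · rcases eq_or_lt_of_le hx.2 with h2 | h2
        · have hxd : x = d := h2
          subst hxd
          have hlim : ContinuousWithinAt Ψ (Set.Ioo c x) x :=
            (hcont x (Set.right_mem_Icc.mpr hcd.le)).mono Set.Ioo_subset_Icc_self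
          have hs : Set.Ioo c x ∈ 𝓝[<] x := Ioo_mem_nhdsLT_of_mem ⟨hcd, le_rfl⟩
          have hlim' : Tendsto (deriv Ψ) (𝓝[<] x) (𝓝 (u x)) := by
            rw [← nhdsWithin_Ioo_eq_nhdsLT (hcd : c < x)]
            have h1 : Tendsto u (𝓝[Set.Ioo c x] x) (𝓝 (u x)) :=
              ((hucont x (Set.right_mem_Icc.mpr hcd.le)).mono Set.Ioo_subset_Icc_self).tendsto
            refine h1.congr' ?_
            filter_upwards [self_mem_nhdsWithin] with z hz
            exact ((hderiv z hz).deriv).symm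
          exact (hasDerivWithinAt_Iic_of_tendsto_deriv hdiff hlim hs hlim').mono
            Set.Icc_subset_Iic_self
        · exact ((hderiv x ⟨h1, h2⟩).hasDerivWithinAt)
    have hcast : ((m+1:ℕ) : WithTop ℕ∞) = (m : WithTop ℕ∞) + 1 := by push_cast; rfl
    rw [hcast, contDiffOn_succ_iff_derivWithin (uniqueDiffOn_Icc hcd)]
    refine ⟨fun x hx => (hder x hx).differentiableWithinAt, ?_, ?_⟩
    · intro h
      exact absurd h (by simp)
    · refine hu.congr fun x hx => ?_
      exact (hder x hx).derivWithin ((uniqueDiffOn_Icc hcd) x hx)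

variable {T : ℝ → ℝ} {a : ℝ} {ψ₀ ψ₁ : ℝ → ℝ} {r : ℕ∞} {c α ε ρ : ℝ}

lemma h1r (hT : Hyp T a ψ₀ ψ₁ r c α ε ρ) : (1 : WithTop ℕ∞) ≤ (r : WithTop ℕ∞) := by
  have h2 : ((2:ℕ∞) : WithTop ℕ∞) ≤ (r : WithTop ℕ∞) := by exact_mod_cast hT.hr
  refine le_trans ?_ h2
  exact_mod_cast one_le_two

lemma Tsmooth0At (hT : Hyp T a ψ₀ ψ₁ r c α ε ρ) {n : WithTop ℕ∞} (hn : n ≤ (r : WithTop ℕ∞))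
    {x : ℝ} (hx : x ∈ Set.Ioo 0 a) : ContDiffAt ℝ n T x := by
  refine (hT.smooth0.of_le hn).contDiffAt ?_
  exact mem_nhds_iff.mpr ⟨Set.Ioo 0 a, Set.Ioo_subset_Ioc_self, isOpen_Ioo, hx⟩

lemma Tsmooth1At (hT : Hyp T a ψ₀ ψ₁ r c α ε ρ) {n : WithTop ℕ∞} (hn : n ≤ (r : WithTop ℕ∞))
    {x : ℝ} (hx : x ∈ Set.Ioo a 1) : ContDiffAt ℝ n T x := by
  refine (hT.smooth1.of_le hn).contDiffAt ?_
  exact mem_nhds_iff.mpr ⟨Set.Ioo a 1, Set.Ioo_subset_Icc_self, isOpen_Ioo, hx⟩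

lemma Tpos (hT : Hyp T a ψ₀ ψ₁ r c α ε ρ) : ∀ x ∈ Set.Ioo 0 a, 1 < deriv T x := by
  have evq : ∀ᶠ x in 𝓝[>] (0:ℝ), 1/2 < (deriv T x - 1) / (c * x ^ α) :=
    hT.asymp.eventually (eventually_gt_nhds (by norm_num))
  obtain ⟨δ, hδ, hδsub⟩ := mem_nhdsGT_iff_exists_Ioo_subset.mp evq
  rw [Set.mem_Ioi] at hδ
  have hq : ∀ x ∈ Set.Ioo (0:ℝ) δ, 1 < deriv T x := by
    intro x hx
    have h1 := hδsub hx
    have hpos : 0 < c * x ^ α := mul_pos hT.hc (Real.rpow_pos_of_pos hx.1 α)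
    rw [Set.mem_setOf_eq, lt_div_iff₀ hpos] at h1
    nlinarith
  intro x hx
  by_cases hxε : x < ε
  · set t := min x δ / 2 with htdef
    have htpos : 0 < t := half_pos (lt_min hx.1 hδ)
    have htx : t < x := by
      have h1 : min x δ ≤ x := min_le_left _ _
      have h2 : 0 < x := hx.1
      rw [htdef]; linarith
    have htδ : t < δ := by
      have h1 : min x δ ≤ δ := min_le_right _ _
      rw [htdef]; linarith
    have h1t := hq t ⟨htpos, htδ⟩
    have hmono := hT.dmono ⟨htpos, lt_trans htx hxε⟩ ⟨hx.1, hxε⟩ htx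
    linarith
  · have hxIco : x ∈ Set.Ico ε a := ⟨not_lt.mp hxε, hx.2⟩
    have hexp := hT.expand x (Or.inl hxIco)
    have hda : HasDerivAt T (deriv T x) x :=
      (((Tsmooth0At hT (h1r hT) hx)).differentiableAt one_ne_zero).hasDerivAt
    have hd0 : 0 ≤ deriv T x := by
      have hsl := hasDerivAt_iff_tendsto_slope.mp hda
      have hsl' : Tendsto (slope T x) (𝓝[>] x) (𝓝 (deriv T x)) :=
        hsl.mono_left (nhdsWithin_mono x fun y hy => ne_of_gt hy)
      refine ge_of_tendsto hsl' ?_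
      filter_upwards [Ioo_mem_nhdsGT_of_mem (⟨le_rfl, hx.2⟩ : x ∈ Set.Ico x a)] with y hy
      have hTlt : T x < T y := hT.mono0 hx ⟨lt_trans hx.1 hy.1, hy.2⟩ hy.1
      rw [slope_def_field]
      exact div_nonneg (by linarith) (by linarith [hy.1])
    have : ρ ≤ deriv T x := by rwa [abs_of_nonneg hd0] at hexp
    linarith [hT.hρ]

lemma branch_setup (hT : Hyp T a ψ₀ ψ₁ r c α ε ρ) (k : ℕ)
    (hkr : ((k : ℕ) : WithTop ℕ∞) + 1 ≤ (r : WithTop ℕ∞)) :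
    ∃ Ψ₀ Ψ₁ : ℝ → ℝ,
      Set.EqOn Ψ₀ ψ₀ (Set.Ioo 0 1) ∧ Set.EqOn Ψ₁ ψ₁ (Set.Ioo 0 1) ∧
      ContDiffOn ℝ k Ψ₀ (Set.Ioc 0 1) ∧ ContDiffOn ℝ k Ψ₁ (Set.Icc 0 1) ∧
      Set.MapsTo Ψ₀ (Set.Ioc 0 1) (Set.Ioc 0 a) ∧
      Set.MapsTo Ψ₁ (Set.Icc 0 1) (Set.Icc a 1) := by
  obtain ⟨ha0, ha1⟩ := hT.ha
  have hk1 : (1 : WithTop ℕ∞) ≤ ((k : ℕ) : WithTop ℕ∞) + 1 := le_add_self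
  have hkr' : ((k : ℕ) : WithTop ℕ∞) ≤ (r : WithTop ℕ∞) :=
    le_trans (le_add_right le_rfl) hkr
  have hTpos := Tpos hT
  -- pointwise facts for ψ₀
  have hinj0 : Set.InjOn T (Set.Ioo 0 a) := by
    intro u hu v hv huv
    rw [← hT.inv0' u hu, ← hT.inv0' v hv, huv]
  have hinj1 : Set.InjOn T (Set.Ioo a 1) := by
    intro u hu v hv huv
    rw [← hT.inv1' u hu, ← hT.inv1' v hv, huv]
  have hψ₀ : ∀ y ∈ Set.Ioo (0:ℝ) 1,
      ContDiffAt ℝ (((k : ℕ) : WithTop ℕ∞) + 1) ψ₀ y ∧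
      HasDerivAt ψ₀ (deriv T (ψ₀ y))⁻¹ y := by
    intro y hy
    have hmem := (hT.inv0 y hy).1
    refine inv_branch hk1 isOpen_Ioo hinj0 (fun z hz => (hT.inv0 z hz).1)
      (fun z hz => (hT.inv0 z hz).2) hy (Tsmooth0At hT hkr hmem) ?_
    have := hTpos _ hmem
    linarith
  have hψ₁ : ∀ y ∈ Set.Ioo (0:ℝ) 1,
      ContDiffAt ℝ (((k : ℕ) : WithTop ℕ∞) + 1) ψ₁ y ∧
      HasDerivAt ψ₁ (deriv T (ψ₁ y))⁻¹ y := by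
    intro y hy
    have hmem := (hT.inv1 y hy).1
    refine inv_branch hk1 isOpen_Ioo hinj1 (fun z hz => (hT.inv1 z hz).1)
      (fun z hz => (hT.inv1 z hz).2) hy (Tsmooth1At hT hkr hmem) ?_
    have := hT.expand _ (Or.inr hmem)
    intro h0
    rw [h0] at this
    simp at this
    linarith [hT.hρ]
  -- Lipschitz bounds
  have hlip0 : LipschitzOnWith 1 ψ₀ (Set.Ioo 0 1) := by
    refine (convex_Ioo (0:ℝ) 1).lipschitzOnWith_of_nnnorm_hasDerivWithin_le
      (f' := fun y => (deriv T (ψ₀ y))⁻¹)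
      (fun y hy => ((hψ₀ y hy).2).hasDerivWithinAt) ?_
    intro y hy
    have h1 := hTpos _ (hT.inv0 y hy).1
    rw [← NNReal.coe_le_coe, coe_nnnorm, NNReal.coe_one, Real.norm_eq_abs,
      abs_of_nonneg (by positivity : (0:ℝ) ≤ (deriv T (ψ₀ y))⁻¹)]
    rw [inv_le_one₀ (by linarith)]
    linarith
  have hlip1 : LipschitzOnWith 1 ψ₁ (Set.Ioo 0 1) := by
    refine (convex_Ioo (0:ℝ) 1).lipschitzOnWith_of_nnnorm_hasDerivWithin_le
      (f' := fun y => (deriv T (ψ₁ y))⁻¹)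
      (fun y hy => ((hψ₁ y hy).2).hasDerivWithinAt) ?_
    intro y hy
    have h1 := hT.expand _ (Or.inr (hT.inv1 y hy).1)
    rw [← NNReal.coe_le_coe, coe_nnnorm, NNReal.coe_one, Real.norm_eq_abs, abs_inv]
    rw [inv_le_one₀ (by linarith [hT.hρ])]
    linarith [hT.hρ]
  obtain ⟨Ψ₀, hΨ₀lip, hΨ₀eq⟩ := hlip0.extend_real
  obtain ⟨Ψ₁, hΨ₁lip, hΨ₁eq⟩ := hlip1.extend_real
  have hEq0 : Set.EqOn Ψ₀ ψ₀ (Set.Ioo 0 1) := fun z hz => (hΨ₀eq hz).symm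
  have hEq1 : Set.EqOn Ψ₁ ψ₁ (Set.Ioo 0 1) := fun z hz => (hΨ₁eq hz).symm
  have h01 : (0:ℝ) < 1 := one_pos
  haveI hnb1 : (𝓝[Set.Ioo (0:ℝ) 1] 1).NeBot := by
    refine mem_closure_iff_nhdsWithin_neBot.mp ?_
    rw [closure_Ioo (by norm_num : (0:ℝ) ≠ 1)]
    exact ⟨zero_le_one, le_rfl⟩
  haveI hnb0 : (𝓝[Set.Ioo (0:ℝ) 1] 0).NeBot := by
    refine mem_closure_iff_nhdsWithin_neBot.mp ?_
    rw [closure_Ioo (by norm_num : (0:ℝ) ≠ 1)]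
    exact ⟨le_rfl, zero_le_one⟩
  -- monotonicity of ψ₀
  have hψ₀mono : ∀ u ∈ Set.Ioo (0:ℝ) 1, ∀ v ∈ Set.Ioo (0:ℝ) 1, u ≤ v → ψ₀ u ≤ ψ₀ v := by
    intro u hu v hv huv
    by_contra hlt
    push_neg at hlt
    have := hT.mono0 (hT.inv0 v hv).1 (hT.inv0 u hu).1 hlt
    rw [(hT.inv0 u hu).2, (hT.inv0 v hv).2] at this
    linarith
  -- mapping of endpoints
  have hΨ₀tend : Tendsto Ψ₀ (𝓝[Set.Ioo (0:ℝ) 1] 1) (𝓝 (Ψ₀ 1)) :=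
    (hΨ₀lip.continuous.continuousAt).continuousWithinAt.tendsto
  have hΨ₀1mem : Ψ₀ 1 ∈ Set.Ioc 0 a := by
    constructor
    · have hkey : ψ₀ (1/2) ≤ Ψ₀ 1 := by
        refine ge_of_tendsto hΨ₀tend ?_
        have h2 : Set.Ici (1/2 : ℝ) ∈ 𝓝[Set.Ioo (0:ℝ) 1] (1:ℝ) :=
          nhdsWithin_le_nhds (Ici_mem_nhds (by norm_num))
        filter_upwards [self_mem_nhdsWithin, h2] with z hz1 hz2
        rw [hEq0 hz1]
        exact hψ₀mono (1/2) (by norm_num) z hz1 hz2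
      have := (hT.inv0 (1/2) (by norm_num)).1.1
      linarith
    · refine le_of_tendsto hΨ₀tend ?_
      filter_upwards [self_mem_nhdsWithin] with z hz
      rw [hEq0 hz]
      exact ((hT.inv0 z hz).1.2).le
  have hmaps0 : Set.MapsTo Ψ₀ (Set.Ioc 0 1) (Set.Ioc 0 a) := by
    intro z hz
    rcases eq_or_lt_of_le hz.2 with h | h
    · rw [h]; exact hΨ₀1mem
    · rw [hEq0 ⟨hz.1, h⟩]
      have := (hT.inv0 z ⟨hz.1, h⟩).1
      exact ⟨this.1, this.2.le⟩
  have hΨ₁memIoo : ∀ z ∈ Set.Ioo (0:ℝ) 1, Ψ₁ z ∈ Set.Icc a 1 := by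
    intro z hz
    rw [hEq1 hz]
    have := (hT.inv1 z hz).1
    exact ⟨this.1.le, this.2.le⟩
  have hmaps1 : Set.MapsTo Ψ₁ (Set.Icc 0 1) (Set.Icc a 1) := by
    intro z hz
    rcases eq_or_lt_of_le hz.1 with h0 | h0
    · have htend : Tendsto Ψ₁ (𝓝[Set.Ioo (0:ℝ) 1] 0) (𝓝 (Ψ₁ 0)) :=
        (hΨ₁lip.continuous.continuousAt).continuousWithinAt.tendsto
      rw [← h0]
      have hcl : IsClosed (Set.Icc a 1) := isClosed_Icc
      refine hcl.mem_of_tendsto htend ?_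
      filter_upwards [self_mem_nhdsWithin] with w hw using hΨ₁memIoo w hw
    · rcases eq_or_lt_of_le hz.2 with h1 | h1
      · have htend : Tendsto Ψ₁ (𝓝[Set.Ioo (0:ℝ) 1] 1) (𝓝 (Ψ₁ 1)) :=
          (hΨ₁lip.continuous.continuousAt).continuousWithinAt.tendsto
        rw [h1]
        refine isClosed_Icc.mem_of_tendsto htend ?_
        filter_upwards [self_mem_nhdsWithin] with w hw using hΨ₁memIoo w hw
      · exact hΨ₁memIoo z ⟨h0, h1⟩
  -- smooth inverse-derivative functions
  have hUI1 : UniqueDiffOn ℝ (Set.Icc a 1) := uniqueDiffOn_Icc ha1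
  have hUI0 : UniqueDiffOn ℝ (Set.Ioc 0 a) := uniqueDiffOn_Ioc 0 a  -- check name
  have hdW1 : ContDiffOn ℝ k (derivWithin T (Set.Icc a 1)) (Set.Icc a 1) :=
    hT.smooth1.derivWithin hUI1 hkr
  have hdW0 : ContDiffOn ℝ k (derivWithin T (Set.Ioc 0 a)) (Set.Ioc 0 a) :=
    hT.smooth0.derivWithin hUI0 hkr
  have hdWeq1 : ∀ z ∈ Set.Ioo a 1, derivWithin T (Set.Icc a 1) z = deriv T z := by
    intro z hz
    exact derivWithin_of_mem_nhds (Icc_mem_nhds hz.1 hz.2)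
  have hdWeq0 : ∀ z ∈ Set.Ioo 0 a, derivWithin T (Set.Ioc 0 a) z = deriv T z := by
    intro z hz
    refine derivWithin_of_mem_nhds ?_
    exact mem_nhds_iff.mpr ⟨Set.Ioo 0 a, Set.Ioo_subset_Ioc_self, isOpen_Ioo, hz⟩
  have hne1 : ∀ t ∈ Set.Icc a 1, derivWithin T (Set.Icc a 1) t ≠ 0 := by
    intro t ht
    have hcl : t ∈ closure (Set.Ioo a 1) := by
      rwa [closure_Ioo (ne_of_lt ha1)]
    haveI := mem_closure_iff_nhdsWithin_neBot.mp hcl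
    have habs : ρ ≤ |derivWithin T (Set.Icc a 1) t| := by
      have hc1 : ContinuousWithinAt (fun z => |derivWithin T (Set.Icc a 1) z|) (Set.Ioo a 1) t :=
        (((hdW1.continuousOn t ht).mono Set.Ioo_subset_Icc_self).abs)
      refine ge_of_tendsto hc1.tendsto ?_
      filter_upwards [self_mem_nhdsWithin] with z hz
      rw [hdWeq1 z hz]
      exact hT.expand z (Or.inr hz)
    intro h0
    rw [h0] at habs
    simp at habs
    linarith [hT.hρ]
  have hne0 : ∀ t ∈ Set.Ioc 0 a, derivWithin T (Set.Ioc 0 a) t ≠ 0 := by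
    intro t ht
    rcases eq_or_lt_of_le ht.2 with h | h
    · subst h
      have hcl : t ∈ closure (Set.Ioo 0 t) := by
        rw [closure_Ioo (ne_of_lt ht.1)]
        exact ⟨ht.1.le, le_rfl⟩
      haveI := mem_closure_iff_nhdsWithin_neBot.mp hcl
      have hge : 1 ≤ derivWithin T (Set.Ioc 0 t) t := by
        have hc1 : ContinuousWithinAt (derivWithin T (Set.Ioc 0 t)) (Set.Ioo 0 t) t :=
          ((hdW0.continuousOn t ⟨ht.1, le_rfl⟩).mono Set.Ioo_subset_Ioc_self)
        refine ge_of_tendsto hc1.tendsto ?_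
        filter_upwards [self_mem_nhdsWithin] with z hz
        rw [hdWeq0 z hz]
        exact (hTpos z hz).le
      linarith
    · have := hTpos t ⟨ht.1, h⟩
      rw [← hdWeq0 t ⟨ht.1, h⟩] at this
      linarith
  set G₁ : ℝ → ℝ := fun t => (derivWithin T (Set.Icc a 1) t)⁻¹ with hG₁def
  set G₀ : ℝ → ℝ := fun t => (derivWithin T (Set.Ioc 0 a) t)⁻¹ with hG₀def
  have hG₁ : ContDiffOn ℝ k G₁ (Set.Icc a 1) := hdW1.inv hne1
  have hG₀ : ContDiffOn ℝ k G₀ (Set.Ioc 0 a) := hdW0.inv hne0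
  -- derivative identities for the extensions
  have hΨ₁deriv : ∀ x ∈ Set.Ioo (0:ℝ) 1, HasDerivAt Ψ₁ (G₁ (Ψ₁ x)) x := by
    intro x hx
    have h := (hψ₁ x hx).2
    have hval : G₁ (Ψ₁ x) = (deriv T (ψ₁ x))⁻¹ := by
      rw [hEq1 hx, hG₁def]
      simp only
      rw [hdWeq1 _ (hT.inv1 x hx).1]
    rw [hval]
    refine h.congr_of_eventuallyEq ?_
    filter_upwards [isOpen_Ioo.mem_nhds hx] with z hz
    exact hEq1 hz
  have hΨ₀deriv : ∀ x ∈ Set.Ioo (0:ℝ) 1, HasDerivAt Ψ₀ (G₀ (Ψ₀ x)) x := by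
    intro x hx
    have h := (hψ₀ x hx).2
    have hval : G₀ (Ψ₀ x) = (deriv T (ψ₀ x))⁻¹ := by
      rw [hEq0 hx, hG₀def]
      simp only
      rw [hdWeq0 _ (hT.inv0 x hx).1]
    rw [hval]
    refine h.congr_of_eventuallyEq ?_
    filter_upwards [isOpen_Ioo.mem_nhds hx] with z hz
    exact hEq0 hz
  -- conclusion for Ψ₁
  have hΨ₁smooth : ContDiffOn ℝ k Ψ₁ (Set.Icc 0 1) :=
    boot h01 hG₁ hmaps1 (hΨ₁lip.continuous.continuousOn) hΨ₁deriv
  -- conclusion for Ψ₀ on Ioc 0 1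
  have hΨ₀smooth : ContDiffOn ℝ k Ψ₀ (Set.Ioc 0 1) := by
    intro x hx
    have hx2 : x / 2 < x := by linarith [hx.1]
    have hx21 : x / 2 < 1 := lt_of_lt_of_le hx2 hx.2
    have hIccsub : Set.Icc (x/2) 1 ⊆ Set.Ioc 0 1 := fun z hz =>
      ⟨lt_of_lt_of_le (by linarith [hx.1] : (0:ℝ) < x/2) hz.1, hz.2⟩
    have hsm : ContDiffOn ℝ k Ψ₀ (Set.Icc (x/2) 1) :=
      boot hx21 hG₀ (fun z hz => hmaps0 (hIccsub hz))
        (hΨ₀lip.continuous.continuousOn)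
        (fun z hz => hΨ₀deriv z ⟨by linarith [hz.1, hx.1], hz.2⟩)
    have hmemx : x ∈ Set.Icc (x/2) 1 := ⟨hx2.le, hx.2⟩
    refine (hsm x hmemx).mono_of_mem_nhdsWithin ?_
    refine mem_nhdsWithin.mpr ⟨Set.Ioi (x/2), isOpen_Ioi, hx2, fun z hz => ?_⟩
    exact ⟨le_of_lt hz.1, hz.2.2⟩
  exact ⟨Ψ₀, Ψ₁, hEq0, hEq1, hΨ₀smooth, hΨ₁smooth, hmaps0, hmaps1⟩

lemma pow_one_add_le {t : ℝ} (ht : 0 ≤ t) (k : ℕ) : (1+t)^k ≤ 2^k * (1+t^k) := by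
  rcases le_total t 1 with h | h
  · calc (1+t)^k ≤ 2^k := by
          refine pow_le_pow_left₀ (by linarith) (by linarith) k
      _ ≤ 2^k * (1+t^k) := by
          have : (0:ℝ) ≤ t^k := by positivity
          nlinarith [pow_pos (by norm_num : (0:ℝ) < 2) k]
  · calc (1+t)^k ≤ (2*t)^k := by
          refine pow_le_pow_left₀ (by linarith) (by linarith) k
      _ = 2^k * t^k := by rw [mul_pow]
      _ ≤ 2^k * (1+t^k) := by
          have : (0:ℝ) < 2^k := pow_pos (by norm_num) k
          nlinarith


end Helpers

/-- Theorem 3.1, convergence part: for every `z ∈ ℂ` with `|z| ≤ 1` and every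
`f ∈ C^k([0,1])`, the series `Q_w(z)f = ∑_{n ≥ 1} zⁿ e^{w∘φ_n} (f∘φ_n)` converges absolutely
in the norm `‖·‖_k` to a `C^k` function on `[0,1]`, with `‖Q_w(z)f‖_k ≤ C(k) c_k ‖f‖_k` for a
constant `C(k)` independent of `f` and `z`; in particular `Q_w(z)` is a bounded operator on
`C^k([0,1])`. -/
theorem statement7 (T : ℝ → ℝ) (a : ℝ) (ψ₀ ψ₁ : ℝ → ℝ) (r : ℕ∞) (c α ε ρ : ℝ)
    (hT : Hyp T a ψ₀ ψ₁ r c α ε ρ) (v : ℝ → ℝ) (k : ℕ) (hk : (k : ℕ∞) < r)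
    (hv : HypV a v k) (ck : ℝ) (h7 : H7 T a ψ₀ ψ₁ v k ck) :
    ∃ C : ℝ, 0 < C ∧ ∀ z : ℂ, ‖z‖ ≤ 1 → ∀ f : ℝ → ℂ, ContDiffOn ℝ k f (Set.Icc 0 1) →
      ∃ F : ℝ → ℂ,
        ContDiffOn ℝ k F (Set.Icc 0 1) ∧
        (∀ x ∈ Set.Ioo (0 : ℝ) 1,
          HasSum (fun n : ℕ => z ^ (n + 1) * Real.exp (indw T a v (phib ψ₀ ψ₁ (n + 1) x)) *
            f (phib ψ₀ ψ₁ (n + 1) x)) (F x)) ∧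
        Summable (fun n : ℕ => nrm k (fun x => z ^ (n + 1) *
          Real.exp (indw T a v (phib ψ₀ ψ₁ (n + 1) x)) * f (phib ψ₀ ψ₁ (n + 1) x))) ∧
        nrm k F ≤ C * ck * nrm k f := by
  classical
  obtain ⟨v0, hv0, hv0eq, -⟩ := hv.ext0
  obtain ⟨v1, hv1, hv1eq⟩ := hv.ext1
  obtain ⟨ha0, ha1⟩ := hT.ha
  have hUIcc : UniqueDiffOn ℝ (Set.Icc (0:ℝ) 1) := uniqueDiffOn_Icc (by norm_num)
  have hkr : ((k : ℕ) : WithTop ℕ∞) + 1 ≤ (r : WithTop ℕ∞) := by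
    have h1 : (k : ℕ∞) + 1 ≤ r := Order.add_one_le_of_lt hk
    exact_mod_cast h1
  obtain ⟨Ψ₀, Ψ₁, hEq0, hEq1, hΨ₀sm, hΨ₁sm, hm0, hm1⟩ := branch_setup hT k hkr
  -- the cutoff function and its derivative bounds
  set χ : ContDiffBump (0.5:ℝ) := ⟨0.6, 1.4, by norm_num, by norm_num⟩ with hχdef
  have hKex : ∀ j : ℕ, ∃ Cj : ℝ, ∀ y : ℝ, ‖iteratedFDeriv ℝ j (χ : ℝ → ℝ) y‖ ≤ Cj := by
    intro j
    have hcont : Continuous (iteratedFDeriv ℝ j (χ : ℝ → ℝ)) := by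
      refine ContDiff.continuous_iteratedFDeriv ?_ (χ.contDiff (n := (j : ℕ∞)))
      exact_mod_cast le_rfl
    have hcs : HasCompactSupport (iteratedFDeriv ℝ j (χ : ℝ → ℝ)) :=
      χ.hasCompactSupport.iteratedFDeriv j
    exact hcont.bounded_above_of_compact_support hcs
  choose Kf hKf using hKex
  set K : ℝ := max 1 ((Finset.range (k+1)).sup' Finset.nonempty_range_add_one Kf) with hKdef
  have hK1 : (1:ℝ) ≤ K := le_max_left _ _
  have hK : ∀ j, j ≤ k → ∀ y : ℝ, ‖iteratedFDeriv ℝ j (χ : ℝ → ℝ) y‖ ≤ K := by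
    intro j hj y
    refine (hKf j y).trans (le_trans ?_ (le_max_right _ _))
    exact Finset.le_sup' Kf (Finset.mem_range.mpr (Nat.lt_succ_of_le hj))
  -- constants
  set C₁ : ℝ := 2^k * (k.factorial : ℝ) * 2^k with hC₁def
  have hC₁pos : 0 < C₁ := by positivity
  set Cbig : ℝ := 2^k * K * (k+2) * C₁ with hCbigdef
  have hCbigpos : 0 < Cbig := by positivity
  refine ⟨Cbig, hCbigpos, ?_⟩
  intro z hz f hf
  -- summable data from (H7)
  set seq : ℕ → ℝ := fun n =>
    nrm k (fun x => Real.exp (indw T a v (phib ψ₀ ψ₁ (n + 1) x))) *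
      (1 + nrm k (phib ψ₀ ψ₁ (n + 1)) ^ k) with hseqdef
  have hseq : Summable seq := (h7 k le_rfl).1
  have hseqsum : ∑' n, seq n ≤ ck := (h7 k le_rfl).2
  have hseqnn : ∀ n, 0 ≤ seq n := by
    intro n
    have h1 := nrm_nonneg k (fun x => Real.exp (indw T a v (phib ψ₀ ψ₁ (n + 1) x)))
    have h2 := nrm_nonneg k (phib ψ₀ ψ₁ (n + 1))
    have h3 : (0:ℝ) ≤ nrm k (phib ψ₀ ψ₁ (n + 1)) ^ k := pow_nonneg h2 k
    rw [hseqdef]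
    exact mul_nonneg h1 (by linarith)
  have hck : 0 ≤ ck := le_trans (tsum_nonneg hseqnn) hseqsum
  have hF0 : 0 ≤ nrm k f := nrm_nonneg k f
  -- iterated inverse branches
  set Φ : ℕ → ℝ → ℝ := fun n => Ψ₀^[n] ∘ Ψ₁ with hΦdef
  have hΦ0 : ∀ x, Φ 0 x = Ψ₁ x := fun x => rfl
  have hΦsucc : ∀ n x, Φ (n+1) x = Ψ₀ (Φ n x) := by
    intro n x
    rw [hΦdef]
    simp only [Function.comp_apply, Function.iterate_succ_apply']
  have hΦpack : ∀ n, ContDiffOn ℝ k (Φ n) (Set.Icc 0 1) ∧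
      Set.MapsTo (Φ n) (Set.Icc 0 1) (Set.Ioc 0 1) := by
    intro n
    induction n with
    | zero =>
      constructor
      · exact hΨ₁sm
      · intro x hx
        have := hm1 hx
        exact ⟨lt_of_lt_of_le ha0 this.1, this.2⟩
    | succ n IH =>
      have hcomp : ContDiffOn ℝ k (fun x => Ψ₀ (Φ n x)) (Set.Icc 0 1) :=
        hΨ₀sm.comp IH.1 IH.2
      constructor
      · refine hcomp.congr fun x hx => (hΦsucc n x)
      · intro x hx
        rw [hΦsucc n x]
        have := hm0 (IH.2 hx)
        exact ⟨this.1, le_trans this.2 ha1.le⟩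
  have hΦmapsa : ∀ n, Set.MapsTo (Φ (n+1)) (Set.Icc 0 1) (Set.Ioc 0 a) := by
    intro n x hx
    rw [hΦsucc n x]
    exact hm0 ((hΦpack n).2 hx)
  -- identification with ψ iterates on (0,1)
  have hpsimem : ∀ n, ∀ x ∈ Set.Ioo (0:ℝ) 1, ψ₀^[n] (ψ₁ x) ∈ Set.Ioo (0:ℝ) 1 := by
    intro n
    induction n with
    | zero =>
      intro x hx
      have := (hT.inv1 x hx).1
      exact ⟨lt_trans ha0 this.1, this.2⟩
    | succ n IH =>
      intro x hx
      rw [Function.iterate_succ_apply']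
      have := (hT.inv0 _ (IH x hx)).1
      exact ⟨this.1, lt_trans this.2 ha1⟩
  have hpsimem' : ∀ n, ∀ x ∈ Set.Ioo (0:ℝ) 1, ψ₀^[n+1] (ψ₁ x) ∈ Set.Ioo (0:ℝ) a := by
    intro n x hx
    rw [Function.iterate_succ_apply']
    exact (hT.inv0 _ (hpsimem n x hx)).1
  have hΦeq : ∀ n, ∀ x ∈ Set.Ioo (0:ℝ) 1, Φ n x = ψ₀^[n] (ψ₁ x) := by
    intro n
    induction n with
    | zero => intro x hx; exact hEq1 hx
    | succ n IH =>
      intro x hx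
      rw [hΦsucc n x, IH x hx, Function.iterate_succ_apply']
      exact hEq0 (hpsimem n x hx)
  have hphib : ∀ n (x : ℝ), phib ψ₀ ψ₁ (n+1) x = ψ₀^[n] (ψ₁ x) := by
    intro n x
    simp [phib]
  -- tau and indw computation
  have hTj : ∀ j m, ∀ x ∈ Set.Ioo (0:ℝ) 1, T^[j] (ψ₀^[j + m] (ψ₁ x)) = ψ₀^[m] (ψ₁ x) := by
    intro j
    induction j with
    | zero => intro m x _; simp
    | succ j IH =>
      intro m x hx
      rw [Function.iterate_succ_apply]
      have h1 : ψ₀^[j + 1 + m] (ψ₁ x) = ψ₀ (ψ₀^[j + m] (ψ₁ x)) := by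
        rw [show j + 1 + m = (j + m) + 1 by omega, Function.iterate_succ_apply']
      rw [h1, (hT.inv0 _ (hpsimem (j+m) x hx)).2]
      exact IH m x hx
  have htau : ∀ n, ∀ x ∈ Set.Ioo (0:ℝ) 1, tau T a (ψ₀^[n] (ψ₁ x)) = n := by
    intro n x hx
    have hmemn : n ∈ {j : ℕ | T^[j] (ψ₀^[n] (ψ₁ x)) ∈ Set.Ioo a 1} := by
      have := hTj n 0 x hx
      rw [Nat.add_zero] at this
      simp only [Set.mem_setOf_eq, this]
      exact (hT.inv1 x hx).1
    have hnotin : ∀ j, j < n → j ∉ {j : ℕ | T^[j] (ψ₀^[n] (ψ₁ x)) ∈ Set.Ioo a 1} := by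
      intro j hj hmem
      have h1 : T^[j] (ψ₀^[n] (ψ₁ x)) = ψ₀^[n - j] (ψ₁ x) := by
        have := hTj j (n - j) x hx
        rwa [show j + (n - j) = n by omega] at this
      rw [Set.mem_setOf_eq, h1] at hmem
      have h2 : ψ₀^[n - j] (ψ₁ x) ∈ Set.Ioo (0:ℝ) a := by
        have := hpsimem' (n - j - 1) x hx
        rwa [show n - j - 1 + 1 = n - j by omega] at this
      exact absurd hmem.1 (not_lt.mpr h2.2.le)
    unfold tau
    refine le_antisymm (Nat.sInf_le hmemn) ?_
    by_contra hlt
    push_neg at hlt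
    exact hnotin _ hlt (Nat.sInf_mem ⟨n, hmemn⟩)
  have hindw : ∀ n, ∀ x ∈ Set.Ioo (0:ℝ) 1, indw T a v (phib ψ₀ ψ₁ (n+1) x)
      = v1 (Ψ₁ x) + ∑ m ∈ Finset.range n, v0 (Φ (m+1) x) := by
    intro n x hx
    rw [hphib n x]
    unfold indw
    rw [htau n x hx]
    have hterm : ∀ j ∈ Finset.range (n+1),
        v (T^[j] (ψ₀^[n] (ψ₁ x))) = (fun m => v (ψ₀^[m] (ψ₁ x))) (n - j) := by
      intro j hj
      rw [Finset.mem_range] at hj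
      have := hTj j (n - j) x hx
      rw [show j + (n - j) = n by omega] at this
      rw [this]
    rw [Finset.sum_congr rfl hterm]
    have hrefl := Finset.sum_range_reflect (fun m => v (ψ₀^[m] (ψ₁ x))) (n+1)
    simp only [Nat.add_sub_cancel] at hrefl
    rw [hrefl, Finset.sum_range_succ']
    simp only [Function.iterate_zero, id_eq]
    rw [add_comm]
    congr 1
    · rw [hv1eq (hT.inv1 x hx).1, hEq1 hx]
    · refine Finset.sum_congr rfl fun m hm => ?_
      rw [hv0eq (hpsimem' m x hx), hΦeq (m+1) x hx]
  -- smooth weight functions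
  set W : ℕ → ℝ → ℝ := fun n x => v1 (Ψ₁ x) + ∑ m ∈ Finset.range n, v0 (Φ (m+1) x) with hWdef
  have hWsm : ∀ n, ContDiffOn ℝ k (W n) (Set.Icc 0 1) := by
    intro n
    refine ContDiffOn.add ?_ ?_
    · exact hv1.comp hΨ₁sm hm1
    · refine ContDiffOn.sum fun m _ => ?_
      refine hv0.comp (hΦpack (m+1)).1 ?_
      intro x hx
      have := hΦmapsa m hx
      exact ⟨this.1.le, this.2⟩
  set Eg : ℕ → ℝ → ℝ := fun n x => Real.exp (W n x) with hEgdef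
  have hEgsm : ∀ n, ContDiffOn ℝ k (Eg n) (Set.Icc 0 1) := fun n =>
    Real.contDiff_exp.comp_contDiffOn (hWsm n)
  -- the individual terms
  set fc : ℕ → ℝ → ℂ := fun n => f ∘ (Φ n) with hfcdef
  have hfcsm : ∀ n, ContDiffOn ℝ k (fc n) (Set.Icc 0 1) := by
    intro n
    refine hf.comp (hΦpack n).1 ?_
    intro x hx
    have := (hΦpack n).2 hx
    exact ⟨this.1.le, this.2⟩
  set inn : ℕ → ℝ → ℂ := fun n x => Eg n x • fc n x with hinndef
  have hinnsm : ∀ n, ContDiffOn ℝ k (inn n) (Set.Icc 0 1) := fun n =>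
    (hEgsm n).smul (hfcsm n)
  set gn : ℕ → ℝ → ℂ := fun n => (z^(n+1)) • (inn n) with hgndef
  have hgnsm : ∀ n, ContDiffOn ℝ k (gn n) (Set.Icc 0 1) := by
    intro n
    have h := (hinnsm n).const_smul (z^(n+1))
    exact h
  set hn : ℕ → ℝ → ℂ := fun n x => z ^ (n + 1) *
    Real.exp (indw T a v (phib ψ₀ ψ₁ (n + 1) x)) * f (phib ψ₀ ψ₁ (n + 1) x) with hhndef
  have hgh : ∀ n, EqOn (hn n) (gn n) (Set.Ioo 0 1) := by
    intro n x hx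
    rw [hhndef, hgndef]
    simp only [Pi.smul_apply, hinndef, smul_eq_mul]
    rw [hindw n x hx]
    have hfeq : f (phib ψ₀ ψ₁ (n+1) x) = fc n x := by
      rw [hfcdef]
      simp only [Function.comp_apply]
      rw [hphib n x, hΦeq n x hx]
    rw [hfeq]
    rw [Complex.real_smul]
    ring
  -- master bound for the derivatives of gn on [0,1]
  set En : ℕ → ℝ := fun n => nrm k (fun x => Real.exp (indw T a v (phib ψ₀ ψ₁ (n + 1) x)))
    with hEndef
  set Pn : ℕ → ℝ := fun n => nrm k (phib ψ₀ ψ₁ (n + 1)) with hPndef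
  set Mn : ℕ → ℝ := fun n => C₁ * seq n * nrm k f with hMndef
  have hMn0 : ∀ n, 0 ≤ Mn n := by
    intro n
    rw [hMndef]
    exact mul_nonneg (mul_nonneg hC₁pos.le (hseqnn n)) hF0
  have hEqE : ∀ n, EqOn (fun x => Real.exp (indw T a v (phib ψ₀ ψ₁ (n + 1) x))) (Eg n)
      (Set.Ioo 0 1) := by
    intro n x hx
    simp only [hEgdef]
    rw [hindw n x hx]
  have hEqΦ : ∀ n, EqOn (phib ψ₀ ψ₁ (n+1)) (Φ n) (Set.Ioo 0 1) := by
    intro n x hx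
    rw [hphib n x, hΦeq n x hx]
  have hmapsIcc : ∀ n, Set.MapsTo (Φ n) (Set.Icc 0 1) (Set.Icc 0 1) := by
    intro n x hx
    have := (hΦpack n).2 hx
    exact ⟨this.1.le, this.2⟩
  have hPn0 : ∀ n, 0 ≤ Pn n := fun n => nrm_nonneg k _
  have hEn0 : ∀ n, 0 ≤ En n := fun n => nrm_nonneg k _
  have hB1 : ∀ n, ∀ j, j ≤ k → ∀ x ∈ Set.Icc (0:ℝ) 1,
      ‖iteratedDerivWithin j (gn n) (Set.Icc 0 1) x‖ ≤ Mn n := by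
    intro n j hj x hx
    have hdomE := dominate (hEgsm n) (hEqE n)
    have hdomΦ := dominate ((hΦpack n).1) (hEqΦ n)
    have hdomf := dominate hf (fun x hx => rfl)
    have hsm : iteratedDerivWithin j (gn n) (Set.Icc 0 1) x
        = z^(n+1) • iteratedDerivWithin j (inn n) (Set.Icc 0 1) x :=
      iteratedDerivWithin_const_smul hx hUIcc _ ((hinnsm n).of_le (by exact_mod_cast hj) x hx)
    rw [hsm, norm_smul]
    have hz1 : ‖z^(n+1)‖ ≤ 1 := by
      rw [norm_pow]
      exact pow_le_one₀ (norm_nonneg z) hz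
    have hinnb : ‖iteratedDerivWithin j (inn n) (Set.Icc 0 1) x‖ ≤ Mn n := by
      rw [← norm_iteratedFDerivWithin_eq_norm_iteratedDerivWithin]
      have hmul := norm_iteratedFDerivWithin_smul_le (𝕜 := ℝ) (f := Eg n) (g := fc n)
        (N := ((k:ℕ) : WithTop ℕ∞)) (hEgsm n) (hfcsm n) hUIcc hx (by exact_mod_cast hj)
      refine hmul.trans ?_
      have hEgbd : ∀ i, i ≤ k → ‖iteratedFDerivWithin ℝ i (Eg n) (Set.Icc 0 1) x‖ ≤ En n := by
        intro i hi
        rw [norm_iteratedFDerivWithin_eq_norm_iteratedDerivWithin]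
        exact hdomE.2 i hi x hx
      have hfcbd : ∀ i, i ≤ k → ‖iteratedFDerivWithin ℝ i (fc n) (Set.Icc 0 1) x‖ ≤
          (k.factorial : ℝ) * nrm k f * (1 + Pn n)^k := by
        intro i hi
        have hcomp := norm_iteratedFDerivWithin_comp_le (𝕜 := ℝ) (g := f) (f := Φ n)
          (n := i) (N := ((k:ℕ) : WithTop ℕ∞)) hf (hΦpack n).1 (by exact_mod_cast hi)
          hUIcc hUIcc (hmapsIcc n) hx (C := nrm k f) (D := 1 + Pn n) ?_ ?_
        · refine hcomp.trans ?_
          have h1 : (i.factorial : ℝ) ≤ (k.factorial : ℝ) := by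
            exact_mod_cast Nat.factorial_le hi
          have h2 : (1 + Pn n)^i ≤ (1 + Pn n)^k :=
            pow_le_pow_right₀ (by linarith [hPn0 n]) hi
          have hp0 : (0:ℝ) ≤ (1 + Pn n)^i := pow_nonneg (by linarith [hPn0 n]) i
          have hif : (0:ℝ) ≤ (i.factorial : ℝ) := by positivity
          calc (i.factorial : ℝ) * nrm k f * (1 + Pn n)^i
              ≤ (k.factorial : ℝ) * nrm k f * (1 + Pn n)^i := by
                refine mul_le_mul_of_nonneg_right ?_ hp0
                exact mul_le_mul_of_nonneg_right h1 hF0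
            _ ≤ (k.factorial : ℝ) * nrm k f * (1 + Pn n)^k := by
                refine mul_le_mul_of_nonneg_left h2 (mul_nonneg (by positivity) hF0)
        · intro i' hi'
          rw [norm_iteratedFDerivWithin_eq_norm_iteratedDerivWithin]
          exact hdomf.2 i' (le_trans hi' hi) (Φ n x) (hmapsIcc n hx)
        · intro i' hi'1 hi'2
          rw [norm_iteratedFDerivWithin_eq_norm_iteratedDerivWithin]
          refine le_trans (hdomΦ.2 i' (le_trans hi'2 hi) x hx) ?_
          calc Pn n ≤ 1 + Pn n := by linarith
            _ ≤ (1 + Pn n)^i' := le_self_pow₀ (by linarith [hPn0 n]) (by omega)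
      set X : ℝ := En n * ((k.factorial : ℝ) * nrm k f * (1 + Pn n)^k) with hXdef
      have hX0 : 0 ≤ X := by
        rw [hXdef]
        exact mul_nonneg (hEn0 n) (mul_nonneg (mul_nonneg (by positivity) hF0)
          (pow_nonneg (by linarith [hPn0 n]) k))
      have hterm : ∀ i ∈ Finset.range (j+1),
          (j.choose i : ℝ) * ‖iteratedFDerivWithin ℝ i (Eg n) (Set.Icc 0 1) x‖ *
            ‖iteratedFDerivWithin ℝ (j-i) (fc n) (Set.Icc 0 1) x‖ ≤ (j.choose i : ℝ) * X := by
        intro i hi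
        rw [Finset.mem_range] at hi
        have h1 := hEgbd i (by omega)
        have h2 := hfcbd (j-i) (by omega)
        have hc0 : (0:ℝ) ≤ (j.choose i : ℝ) := by positivity
        rw [hXdef, mul_assoc]
        refine mul_le_mul_of_nonneg_left ?_ hc0
        exact mul_le_mul h1 h2 (norm_nonneg _) (hEn0 n)
      have hsum : (∑ i ∈ Finset.range (j+1),
          (j.choose i : ℝ) * ‖iteratedFDerivWithin ℝ i (Eg n) (Set.Icc 0 1) x‖ *
            ‖iteratedFDerivWithin ℝ (j-i) (fc n) (Set.Icc 0 1) x‖)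
          ≤ (2:ℝ)^j * X := by
        refine le_trans (Finset.sum_le_sum hterm) ?_
        rw [← Finset.sum_mul]
        have : (∑ i ∈ Finset.range (j+1), (j.choose i : ℝ)) = (2:ℝ)^j := by
          rw [← Nat.cast_sum]
          rw [Nat.sum_range_choose]
          push_cast
          ring
        rw [this]
      refine hsum.trans ?_
      have h2jk : (2:ℝ)^j ≤ 2^k := pow_le_pow_right₀ (by norm_num) hj
      have hXle : X ≤ En n * ((k.factorial : ℝ) * nrm k f * (2^k * (1 + Pn n ^ k))) := by
        rw [hXdef]
        refine mul_le_mul_of_nonneg_left ?_ (hEn0 n)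
        refine mul_le_mul_of_nonneg_left ?_ (by positivity)
        exact pow_one_add_le (hPn0 n) k
      calc (2:ℝ)^j * X ≤ 2^k * X := mul_le_mul_of_nonneg_right h2jk hX0
        _ ≤ 2^k * (En n * ((k.factorial : ℝ) * nrm k f * (2^k * (1 + Pn n ^ k)))) :=
            mul_le_mul_of_nonneg_left hXle (by positivity)
        _ = C₁ * (En n * (1 + Pn n ^ k)) * nrm k f := by
            rw [hC₁def]; ring
        _ = Mn n := by rw [hMndef, hseqdef, hEndef, hPndef]
    calc ‖z^(n+1)‖ * ‖iteratedDerivWithin j (inn n) (Set.Icc 0 1) x‖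
        ≤ 1 * ‖iteratedDerivWithin j (inn n) (Set.Icc 0 1) x‖ :=
          mul_le_mul_of_nonneg_right hz1 (norm_nonneg _)
      _ = ‖iteratedDerivWithin j (inn n) (Set.Icc 0 1) x‖ := one_mul _
      _ ≤ Mn n := hinnb
  have hB2 : ∀ n, nrm k (hn n) ≤ Mn n := by
    intro n
    have hdom := dominate (hgnsm n) (hgh n)
    refine Finset.sup'_le _ _ fun j hj => ?_
    rw [Finset.mem_range] at hj
    refine Real.sSup_le ?_ (hMn0 n)
    rintro y ⟨x, hx, rfl⟩
    show ‖iteratedDerivWithin j (hn n) (Set.Ioo 0 1) x‖ ≤ Mn n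
    rw [hdom.1 j (by omega) x hx]
    exact hB1 n j (by omega) x (Set.mem_Icc_of_Ioo hx)
  -- glue to global functions
  have hglue : ∀ n, ∃ G : ℝ → ℂ, ContDiff ℝ k G ∧ Set.EqOn G (gn n) (Set.Icc 0 1) ∧
      ∀ j, j ≤ k → ∀ y ∈ Set.Icc (-1:ℝ) 2, ‖iteratedDeriv j G y‖ ≤ (k+2) * Mn n := by
    intro n
    exact glue_pack k (gn n) (hgnsm n) (hMn0 n) (hB1 n)
  choose G hGsm hGeq hGbd using hglue
  set u : ℕ → ℝ → ℂ := fun n y => χ y • G n y with hudef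
  set vb : ℕ → ℝ := fun n => Cbig * nrm k f * seq n with hvbdef
  have hvb0 : ∀ n, 0 ≤ vb n := by
    intro n
    rw [hvbdef]
    exact mul_nonneg (mul_nonneg hCbigpos.le hF0) (hseqnn n)
  have hvbsum : Summable vb := by
    rw [hvbdef]
    exact hseq.mul_left _
  have husm : ∀ n, ContDiff ℝ k (u n) := by
    intro n
    refine ContDiff.fun_smul ?_ (hGsm n)
    exact χ.contDiff
  have htsupp : tsupport (χ : ℝ → ℝ) ⊆ Set.Icc (-1:ℝ) 2 := by
    rw [χ.tsupport_eq]
    intro y hy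
    rw [Metric.mem_closedBall, Real.dist_eq] at hy
    have := abs_le.mp hy
    constructor <;> [linarith [this.1]; linarith [this.2]]
  have hub : ∀ j, j ≤ k → ∀ n, ∀ y : ℝ, ‖iteratedFDeriv ℝ j (u n) y‖ ≤ vb n := by
    intro j hj n y
    by_cases hy : y ∈ tsupport (χ : ℝ → ℝ)
    · have hyI : y ∈ Set.Icc (-1:ℝ) 2 := htsupp hy
      have hsmul := norm_iteratedFDeriv_smul_le (𝕜 := ℝ) (f := (χ : ℝ → ℝ)) (g := G n)
        (N := ((k:ℕ) : WithTop ℕ∞)) (χ.contDiff) (hGsm n) y (by exact_mod_cast hj)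
      refine hsmul.trans ?_
      have hGb : ∀ i, i ≤ k → ‖iteratedFDeriv ℝ i (G n) y‖ ≤ (k+2) * Mn n := by
        intro i hi
        rw [norm_iteratedFDeriv_eq_norm_iteratedDeriv]
        exact hGbd n i hi y hyI
      have hterm : ∀ i ∈ Finset.range (j+1), (j.choose i : ℝ) *
          ‖iteratedFDeriv ℝ i (χ : ℝ → ℝ) y‖ * ‖iteratedFDeriv ℝ (j-i) (G n) y‖ ≤
          (j.choose i : ℝ) * (K * ((k+2) * Mn n)) := by
        intro i hi
        rw [Finset.mem_range] at hi
        rw [mul_assoc]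
        refine mul_le_mul_of_nonneg_left ?_ (by positivity)
        have hMnn := hMn0 n
        refine mul_le_mul (hK i (by omega) y) (hGb (j-i) (by omega)) (norm_nonneg _) ?_
        linarith [hK1]
      refine le_trans (Finset.sum_le_sum hterm) ?_
      rw [← Finset.sum_mul]
      have hch : (∑ i ∈ Finset.range (j+1), (j.choose i : ℝ)) = (2:ℝ)^j := by
        rw [← Nat.cast_sum, Nat.sum_range_choose]
        push_cast
        ring
      rw [hch]
      have h2jk : (2:ℝ)^j ≤ 2^k := pow_le_pow_right₀ (by norm_num) hj
      have hrhs : (0:ℝ) ≤ K * ((k+2) * Mn n) := by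
        have := hMn0 n
        have : (0:ℝ) ≤ (k+2) * Mn n := by positivity
        nlinarith [hK1]
      calc (2:ℝ)^j * (K * ((k+2) * Mn n)) ≤ 2^k * (K * ((k+2) * Mn n)) :=
            mul_le_mul_of_nonneg_right h2jk hrhs
        _ = vb n := by rw [hvbdef, hMndef, hCbigdef]; ring
    · have hopen : IsOpen (tsupport (χ : ℝ → ℝ))ᶜ := (isClosed_tsupport _).isOpen_compl
      have hev : (fun w => u n w) =ᶠ[𝓝 y] (fun _ => (0:ℂ)) := by
        filter_upwards [hopen.mem_nhds hy] with w hw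
        have hw0 : (χ : ℝ → ℝ) w = 0 := image_eq_zero_of_notMem_tsupport hw
        show χ w • G n w = 0
        rw [hw0, zero_smul]
      have h0 : u n y = (0:ℂ) := hev.eq_of_nhds
      have hzero : iteratedFDeriv ℝ j (u n) y = 0 := by
        have hstep : iteratedFDeriv ℝ j (u n) y = iteratedFDeriv ℝ j (fun _ => (0:ℂ)) y := by
          rw [← iteratedFDerivWithin_univ, ← iteratedFDerivWithin_univ]
          refine Filter.EventuallyEq.iteratedFDerivWithin_eq ?_ h0 j
          rw [nhdsWithin_univ]
          exact hev
        rw [hstep, iteratedFDeriv_zero_fun]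
        rfl
      rw [hzero]
      simpa using hvb0 n
  set Ffun : ℝ → ℂ := fun x => ∑' n, u n x with hFdef
  have hFsm : ContDiff ℝ k Ffun := by
    refine contDiff_tsum (f := u) (v := fun _ n => vb n) husm (fun j _ => hvbsum) ?_
    intro j n y hj
    exact hub j (by exact_mod_cast hj) n y
  refine ⟨Ffun, hFsm.contDiffOn, ?_, ?_, ?_⟩
  · -- HasSum
    intro x hx
    have hsummable : Summable (fun n => u n x) := by
      refine Summable.of_norm_bounded hvbsum fun n => ?_
      have := hub 0 (Nat.zero_le k) n x
      rwa [norm_iteratedFDeriv_zero] at this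
    have hs : HasSum (fun n => u n x) (Ffun x) := hsummable.hasSum
    have hfun : (fun n : ℕ => z ^ (n + 1) * Real.exp (indw T a v (phib ψ₀ ψ₁ (n + 1) x)) *
        f (phib ψ₀ ψ₁ (n + 1) x)) = fun n => u n x := by
      funext n
      have h1 : (χ : ℝ → ℝ) x = 1 := by
        refine χ.one_of_mem_closedBall ?_
        rw [Metric.mem_closedBall, Real.dist_eq, abs_le]
        constructor <;> [linarith [hx.1]; linarith [hx.2]]
      have h2 : G n x = gn n x := hGeq n (Set.mem_Icc_of_Ioo hx)
      rw [hudef]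
      simp only
      rw [h1, h2, one_smul, ← hgh n hx, hhndef]
    rw [hfun]
    exact hs
  · -- Summable of norms
    refine Summable.of_nonneg_of_le (fun n => nrm_nonneg k _) (fun n => hB2 n) ?_
    rw [hMndef]
    exact (hseq.mul_left C₁).mul_right (nrm k f)
  · -- final bound
    refine Finset.sup'_le _ _ fun j hj => ?_
    rw [Finset.mem_range] at hj
    have hjk : j ≤ k := by omega
    refine Real.sSup_le ?_ (mul_nonneg (mul_nonneg hCbigpos.le hck) hF0)
    rintro y ⟨x, hx, rfl⟩
    show ‖iteratedDerivWithin j Ffun (Set.Ioo 0 1) x‖ ≤ Cbig * ck * nrm k f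
    rw [← norm_iteratedFDerivWithin_eq_norm_iteratedDerivWithin,
      iteratedFDerivWithin_of_isOpen j isOpen_Ioo hx]
    have heq : iteratedFDeriv ℝ j Ffun x = ∑' n, iteratedFDeriv ℝ j (u n) x := by
      refine iteratedFDeriv_tsum_apply (v := fun _ n => vb n) husm (fun _ _ => hvbsum) ?_ ?_ x
      · intro j' n y hj'
        exact hub j' (by exact_mod_cast hj') n y
      · exact_mod_cast hjk
    rw [heq]
    have h1 : ‖∑' n, iteratedFDeriv ℝ j (u n) x‖ ≤ ∑' n, vb n :=
      tsum_of_norm_bounded hvbsum.hasSum fun n => hub j hjk n x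
    refine h1.trans ?_
    have h2 : ∑' n, vb n = (Cbig * nrm k f) * ∑' n, seq n := by
      rw [hvbdef, tsum_mul_left]
    rw [h2]
    calc (Cbig * nrm k f) * ∑' n, seq n ≤ (Cbig * nrm k f) * ck := by
          refine mul_le_mul_of_nonneg_left hseqsum (mul_nonneg hCbigpos.le hF0)
      _ = Cbig * ck * nrm k f := by ring

end
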